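/- arXiv:0904.0160 — 2 statements merged into one kernel-verified Lean document; each statement's English description precedes it below -/
import Mathlib

section
/- Let A, B be bounded linear operators on a Banach space and define the second splitting iterate c₂(τ) = exp(τB)c₀ + ∫₀^τ exp((τ−s)B) A exp(sA) c₀ ds. Then ‖exp(τ(A+B))c₀ − c₂(τ)‖ ≤ C τ² ‖c₀‖ for all τ ∈ [0,1], where C depends only on ‖A‖ and ‖B‖. -/
set_option maxHeartbeats 1000000

open NormedSpace intervalIntegral

section aux
variable {X : Type*} [NormedAddCommGroup X] [NormedSpace ℝ X] [CompleteSpace X]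

lemma exp_tail_bound (M : X →L[ℝ] X) {k : ℕ} (hk : 0 < k) :
    ‖NormedSpace.exp M - ∑ i ∈ Finset.range k, ((i.factorial : ℝ)⁻¹) • M ^ i‖ ≤
      ‖M‖ ^ k * Real.exp ‖M‖ := by
  have h := NormedSpace.exp_series_hasSum_exp' (𝕂 := ℝ) M
  have h2 : HasSum (fun n => (((n + k).factorial : ℝ)⁻¹) • M ^ (n + k))
      (NormedSpace.exp M - ∑ i ∈ Finset.range k, ((i.factorial : ℝ)⁻¹) • M ^ i) := by
    exact (hasSum_nat_add_iff' k).mpr h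
  have hmaj : ∀ n : ℕ, ‖(((n + k).factorial : ℝ)⁻¹) • M ^ (n + k)‖ ≤
      ‖M‖ ^ k * (‖M‖ ^ n / n.factorial) := by
    intro n
    rw [norm_smul (α := ℝ) ((((n + k).factorial : ℝ))⁻¹) (M ^ (n + k)), Real.norm_eq_abs, abs_of_nonneg (by positivity)]
    have h1 : ‖M ^ (n + k)‖ ≤ ‖M‖ ^ (n + k) := norm_pow_le' M (by omega)
    have h2 : ((n + k).factorial : ℝ)⁻¹ ≤ (n.factorial : ℝ)⁻¹ := by
      apply inv_anti₀ (by positivity)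
      exact_mod_cast Nat.factorial_le (by omega)
    calc ((n + k).factorial : ℝ)⁻¹ * ‖M ^ (n + k)‖
        ≤ (n.factorial : ℝ)⁻¹ * ‖M‖ ^ (n + k) := by
          apply mul_le_mul h2 h1 (norm_nonneg _) (by positivity)
      _ = ‖M‖ ^ k * (‖M‖ ^ n / n.factorial) := by rw [pow_add]; ring
  have hsum : Summable fun n : ℕ => ‖M‖ ^ k * (‖M‖ ^ n / n.factorial) :=
    (Real.summable_pow_div_factorial ‖M‖).mul_left _
  have hsn : Summable fun n => ‖(((n + k).factorial : ℝ)⁻¹) • M ^ (n + k)‖ :=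
    Summable.of_nonneg_of_le (fun n => norm_nonneg _) hmaj hsum
  calc ‖NormedSpace.exp M - ∑ i ∈ Finset.range k, ((i.factorial : ℝ)⁻¹) • M ^ i‖
      = ‖∑' n, (((n + k).factorial : ℝ)⁻¹) • M ^ (n + k)‖ := by rw [h2.tsum_eq]
    _ ≤ ∑' n, ‖(((n + k).factorial : ℝ)⁻¹) • M ^ (n + k)‖ := norm_tsum_le_tsum_norm hsn
    _ ≤ ∑' n, ‖M‖ ^ k * (‖M‖ ^ n / n.factorial) := Summable.tsum_le_tsum hmaj hsn hsum
    _ = ‖M‖ ^ k * ∑' n, (‖M‖ ^ n / n.factorial) := by rw [tsum_mul_left]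
    _ = ‖M‖ ^ k * Real.exp ‖M‖ := by
        rw [Real.exp_eq_exp_ℝ, NormedSpace.exp_eq_tsum_div]

lemma exp_sub_one_bound (M : X →L[ℝ] X) :
    ‖NormedSpace.exp M - 1‖ ≤ ‖M‖ * Real.exp ‖M‖ := by
  have := exp_tail_bound M (k := 1) one_pos
  simpa using this

lemma exp_sub_one_sub_bound (M : X →L[ℝ] X) :
    ‖NormedSpace.exp M - 1 - M‖ ≤ ‖M‖ ^ 2 * Real.exp ‖M‖ := by
  have := exp_tail_bound M (k := 2) two_pos
  rw [Finset.sum_range_succ, Finset.sum_range_one] at this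
  simpa [sub_sub] using this

lemma exp_norm_bound (M : X →L[ℝ] X) :
    ‖NormedSpace.exp M‖ ≤ Real.exp (2 * ‖M‖) := by
  have h1 : ‖NormedSpace.exp M‖ ≤ ‖NormedSpace.exp M - 1‖ + ‖(1 : X →L[ℝ] X)‖ := by
    simpa using norm_add_le (NormedSpace.exp M - 1) 1
  have h2 : ‖(1 : X →L[ℝ] X)‖ ≤ 1 := by
    rw [ContinuousLinearMap.one_def]; exact ContinuousLinearMap.norm_id_le
  have h3 := exp_sub_one_bound M
  have h4 : ‖M‖ + 1 ≤ Real.exp ‖M‖ + Real.exp ‖M‖ * ‖M‖ := by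
    nlinarith [Real.add_one_le_exp ‖M‖, Real.exp_pos ‖M‖, norm_nonneg M]
  have h5 : Real.exp (2 * ‖M‖) = Real.exp ‖M‖ * Real.exp ‖M‖ := by
    rw [← Real.exp_add]; ring_nf
  nlinarith [Real.add_one_le_exp ‖M‖, Real.exp_pos ‖M‖, norm_nonneg M]
end aux

/-- Second-iterate error bound: for
`c₂(τ) = exp(τB)c₀ + ∫₀^τ exp((τ−s)B) A exp(sA) c₀ ds` one has
`‖exp(τ(A+B))c₀ − c₂(τ)‖ ≤ C τ² ‖c₀‖` for all `τ ∈ [0,1]`, with `C` depending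
only on `‖A‖` and `‖B‖`. -/
theorem second_iterate_error {X : Type*} [NormedAddCommGroup X] [NormedSpace ℝ X]
    [CompleteSpace X] (A B : X →L[ℝ] X) :
    ∃ C : ℝ, 0 ≤ C ∧ ∀ c₀ : X, ∀ τ : ℝ, 0 ≤ τ → τ ≤ 1 →
      ‖(NormedSpace.exp (τ • (A + B))) c₀ -
          ((NormedSpace.exp (τ • B)) c₀ +
            ∫ s in (0:ℝ)..τ,
              (NormedSpace.exp ((τ - s) • B)) (A ((NormedSpace.exp (s • A)) c₀)))‖ ≤
        C * τ ^ 2 * ‖c₀‖ := by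
  set K : ℝ := ‖A‖ + ‖B‖ with hK
  have hK0 : 0 ≤ K := by positivity
  refine ⟨4 * K ^ 2 * Real.exp (3 * K), by positivity, ?_⟩
  intro c₀ τ hτ0 hτ1
  set g : ℝ → X := fun s => (NormedSpace.exp ((τ - s) • B)) (A ((NormedSpace.exp (s • A)) c₀))
    with hg
  -- continuity and integrability
  have hgc : Continuous g := by
    apply Continuous.clm_apply
    · exact (continuous_iff_continuousAt.2 fun x => (NormedSpace.exp_analytic (𝕂 := ℝ) x).continuousAt).comp (by continuity)
    · exact (A.continuous.comp (Continuous.clm_apply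
        ((continuous_iff_continuousAt.2 fun x => (NormedSpace.exp_analytic (𝕂 := ℝ) x).continuousAt).comp (by continuity)) continuous_const))
  have hInt : IntervalIntegrable g MeasureTheory.volume 0 τ := hgc.intervalIntegrable _ _
  have hcInt : IntervalIntegrable (fun _ : ℝ => A c₀) MeasureTheory.volume 0 τ :=
    continuous_const.intervalIntegrable _ _
  have hsplit : (∫ s in (0:ℝ)..τ, g s) =
      (∫ s in (0:ℝ)..τ, (g s - A c₀)) + τ • (A c₀) := by
    rw [intervalIntegral.integral_sub hInt hcInt, intervalIntegral.integral_const, sub_zero]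
    abel
  -- key identity
  have hid : (NormedSpace.exp (τ • (A + B))) c₀ -
      ((NormedSpace.exp (τ • B)) c₀ + ∫ s in (0:ℝ)..τ, g s) =
      ((NormedSpace.exp (τ • (A + B)) - 1 - τ • (A + B)) c₀) -
      ((NormedSpace.exp (τ • B) - 1 - τ • B) c₀) -
      (∫ s in (0:ℝ)..τ, (g s - A c₀)) := by
    rw [hsplit]
    simp only [ContinuousLinearMap.sub_apply, ContinuousLinearMap.smul_apply,
      ContinuousLinearMap.one_apply, ContinuousLinearMap.add_apply, smul_add]
    abel
  rw [hid]
  -- bounds for the three pieces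
  have hAB : ‖A + B‖ ≤ K := norm_add_le A B
  have hnorm_smul : ∀ (t : ℝ) (M : X →L[ℝ] X), 0 ≤ t → ‖t • M‖ = t * ‖M‖ := by
    intro t M ht
    rw [norm_smul (α := ℝ) t M, Real.norm_eq_abs, abs_of_nonneg ht]
  have hT1 : ‖(NormedSpace.exp (τ • (A + B)) - 1 - τ • (A + B)) c₀‖ ≤
      τ ^ 2 * K ^ 2 * Real.exp (3 * K) * ‖c₀‖ := by
    calc ‖(NormedSpace.exp (τ • (A + B)) - 1 - τ • (A + B)) c₀‖
        ≤ ‖NormedSpace.exp (τ • (A + B)) - 1 - τ • (A + B)‖ * ‖c₀‖ :=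
          ContinuousLinearMap.le_opNorm _ _
      _ ≤ (‖τ • (A + B)‖ ^ 2 * Real.exp ‖τ • (A + B)‖) * ‖c₀‖ := by
          gcongr; exact exp_sub_one_sub_bound _
      _ ≤ τ ^ 2 * K ^ 2 * Real.exp (3 * K) * ‖c₀‖ := by
          rw [hnorm_smul τ _ hτ0]
          have h1 : τ * ‖A + B‖ ≤ τ * K := by nlinarith
          have h2 : τ * ‖A + B‖ ≤ 3 * K := by nlinarith [norm_nonneg (A + B)]
          have : (τ * ‖A + B‖) ^ 2 * Real.exp (τ * ‖A + B‖) ≤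
              (τ * K) ^ 2 * Real.exp (3 * K) := by
            gcongr
          nlinarith [norm_nonneg c₀]
  have hT2 : ‖(NormedSpace.exp (τ • B) - 1 - τ • B) c₀‖ ≤
      τ ^ 2 * K ^ 2 * Real.exp (3 * K) * ‖c₀‖ := by
    calc ‖(NormedSpace.exp (τ • B) - 1 - τ • B) c₀‖
        ≤ ‖NormedSpace.exp (τ • B) - 1 - τ • B‖ * ‖c₀‖ :=
          ContinuousLinearMap.le_opNorm _ _
      _ ≤ (‖τ • B‖ ^ 2 * Real.exp ‖τ • B‖) * ‖c₀‖ := by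
          gcongr; exact exp_sub_one_sub_bound _
      _ ≤ τ ^ 2 * K ^ 2 * Real.exp (3 * K) * ‖c₀‖ := by
          rw [hnorm_smul τ _ hτ0]
          have hBK : ‖B‖ ≤ K := by rw [hK]; nlinarith [norm_nonneg A]
          have h1 : τ * ‖B‖ ≤ τ * K := by nlinarith
          have h2 : τ * ‖B‖ ≤ 3 * K := by nlinarith [norm_nonneg B]
          have : (τ * ‖B‖) ^ 2 * Real.exp (τ * ‖B‖) ≤
              (τ * K) ^ 2 * Real.exp (3 * K) := by
            gcongr
          nlinarith [norm_nonneg c₀]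
  -- pointwise bound for the integrand
  have hptw : ∀ s ∈ Set.uIoc (0:ℝ) τ,
      ‖g s - A c₀‖ ≤ 2 * τ * K ^ 2 * Real.exp (3 * K) * ‖c₀‖ := by
    intro s hs
    rw [Set.uIoc_of_le hτ0] at hs
    obtain ⟨hs0, hsτ⟩ := hs
    have hs0' : (0:ℝ) ≤ s := le_of_lt hs0
    have hts : 0 ≤ τ - s := by linarith
    have hAK : ‖A‖ ≤ K := by rw [hK]; nlinarith [norm_nonneg B]
    have hBK : ‖B‖ ≤ K := by rw [hK]; nlinarith [norm_nonneg A]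
    have hdecomp : g s - A c₀ =
        ((NormedSpace.exp ((τ - s) • B) - 1) (A ((NormedSpace.exp (s • A)) c₀))) +
        (A ((NormedSpace.exp (s • A) - 1) c₀)) := by
      simp only [hg, ContinuousLinearMap.sub_apply, ContinuousLinearMap.one_apply, map_sub]
      abel
    rw [hdecomp]
    have hb1 : ‖(NormedSpace.exp ((τ - s) • B) - 1) (A ((NormedSpace.exp (s • A)) c₀))‖ ≤
        τ * K ^ 2 * Real.exp (3 * K) * ‖c₀‖ := by
      calc ‖(NormedSpace.exp ((τ - s) • B) - 1) (A ((NormedSpace.exp (s • A)) c₀))‖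
          ≤ ‖NormedSpace.exp ((τ - s) • B) - 1‖ * (‖A‖ * (‖NormedSpace.exp (s • A)‖ * ‖c₀‖)) := by
            refine (ContinuousLinearMap.le_opNorm _ _).trans ?_
            gcongr
            exact (ContinuousLinearMap.le_opNorm _ _).trans (by gcongr; exact ContinuousLinearMap.le_opNorm _ _)
        _ ≤ (‖(τ - s) • B‖ * Real.exp ‖(τ - s) • B‖) * (‖A‖ * (Real.exp (2 * ‖s • A‖) * ‖c₀‖)) := by
            gcongr
            · exact exp_sub_one_bound _
            · exact exp_norm_bound _
        _ ≤ τ * K ^ 2 * Real.exp (3 * K) * ‖c₀‖ := by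
            rw [hnorm_smul _ _ hts, hnorm_smul _ _ hs0']
            have e1 : (τ - s) * ‖B‖ ≤ τ * K := by nlinarith [norm_nonneg B]
            have e2 : Real.exp ((τ - s) * ‖B‖) * Real.exp (2 * (s * ‖A‖)) ≤
                Real.exp (3 * K) := by
              rw [← Real.exp_add]
              apply Real.exp_le_exp.mpr
              nlinarith [norm_nonneg A, norm_nonneg B]
            have e3 : 0 ≤ (τ - s) * ‖B‖ := by positivity
            have e4 : 0 ≤ Real.exp ((τ - s) * ‖B‖) := (Real.exp_pos _).le
            have e5 : 0 ≤ Real.exp (2 * (s * ‖A‖)) := (Real.exp_pos _).le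
            calc (τ - s) * ‖B‖ * Real.exp ((τ - s) * ‖B‖) *
                  (‖A‖ * (Real.exp (2 * (s * ‖A‖)) * ‖c₀‖))
                = ((τ - s) * ‖B‖ * ‖A‖) *
                  (Real.exp ((τ - s) * ‖B‖) * Real.exp (2 * (s * ‖A‖))) * ‖c₀‖ := by ring
              _ ≤ (τ * K * K) * Real.exp (3 * K) * ‖c₀‖ := by
                  gcongr
              _ = τ * K ^ 2 * Real.exp (3 * K) * ‖c₀‖ := by ring
    have hb2 : ‖A ((NormedSpace.exp (s • A) - 1) c₀)‖ ≤
        τ * K ^ 2 * Real.exp (3 * K) * ‖c₀‖ := by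
      calc ‖A ((NormedSpace.exp (s • A) - 1) c₀)‖
          ≤ ‖A‖ * (‖NormedSpace.exp (s • A) - 1‖ * ‖c₀‖) := by
            refine (ContinuousLinearMap.le_opNorm _ _).trans ?_
            gcongr
            exact ContinuousLinearMap.le_opNorm _ _
        _ ≤ ‖A‖ * ((‖s • A‖ * Real.exp ‖s • A‖) * ‖c₀‖) := by
            gcongr
            exact exp_sub_one_bound _
        _ ≤ τ * K ^ 2 * Real.exp (3 * K) * ‖c₀‖ := by
            rw [hnorm_smul _ _ hs0']
            have e1 : s * ‖A‖ ≤ τ * K := by nlinarith [norm_nonneg A]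
            have e2 : Real.exp (s * ‖A‖) ≤ Real.exp (3 * K) := by
              apply Real.exp_le_exp.mpr
              nlinarith [norm_nonneg A]
            calc ‖A‖ * (s * ‖A‖ * Real.exp (s * ‖A‖) * ‖c₀‖)
                = (s * ‖A‖ * ‖A‖) * Real.exp (s * ‖A‖) * ‖c₀‖ := by ring
              _ ≤ (τ * K * K) * Real.exp (3 * K) * ‖c₀‖ := by
                  gcongr
              _ = τ * K ^ 2 * Real.exp (3 * K) * ‖c₀‖ := by ring
    calc ‖((NormedSpace.exp ((τ - s) • B) - 1) (A ((NormedSpace.exp (s • A)) c₀))) +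
          (A ((NormedSpace.exp (s • A) - 1) c₀))‖
        ≤ ‖(NormedSpace.exp ((τ - s) • B) - 1) (A ((NormedSpace.exp (s • A)) c₀))‖ +
          ‖A ((NormedSpace.exp (s • A) - 1) c₀)‖ := norm_add_le _ _
      _ ≤ 2 * τ * K ^ 2 * Real.exp (3 * K) * ‖c₀‖ := by linarith
  have hI : ‖∫ s in (0:ℝ)..τ, (g s - A c₀)‖ ≤
      2 * τ ^ 2 * K ^ 2 * Real.exp (3 * K) * ‖c₀‖ := by
    have := intervalIntegral.norm_integral_le_of_norm_le_const hptw
    rw [sub_zero, abs_of_nonneg hτ0] at this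
    calc ‖∫ s in (0:ℝ)..τ, (g s - A c₀)‖
        ≤ 2 * τ * K ^ 2 * Real.exp (3 * K) * ‖c₀‖ * τ := this
      _ = 2 * τ ^ 2 * K ^ 2 * Real.exp (3 * K) * ‖c₀‖ := by ring
  calc ‖((NormedSpace.exp (τ • (A + B)) - 1 - τ • (A + B)) c₀) -
        ((NormedSpace.exp (τ • B) - 1 - τ • B) c₀) -
        (∫ s in (0:ℝ)..τ, (g s - A c₀))‖
      ≤ ‖((NormedSpace.exp (τ • (A + B)) - 1 - τ • (A + B)) c₀) -
        ((NormedSpace.exp (τ • B) - 1 - τ • B) c₀)‖ +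
        ‖∫ s in (0:ℝ)..τ, (g s - A c₀)‖ := norm_sub_le _ _
    _ ≤ ‖(NormedSpace.exp (τ • (A + B)) - 1 - τ • (A + B)) c₀‖ +
        ‖(NormedSpace.exp (τ • B) - 1 - τ • B) c₀‖ +
        ‖∫ s in (0:ℝ)..τ, (g s - A c₀)‖ := by
          gcongr
          exact norm_sub_le _ _
    _ ≤ 4 * K ^ 2 * Real.exp (3 * K) * τ ^ 2 * ‖c₀‖ := by nlinarith [norm_nonneg c₀]
end

section
/- Let A, B be bounded linear operators on a Banach space X. Define the iterative splitting sequence on [0,τ]: c₁(t) = exp(tA)c₀, and for i ≥ 2, c_i(t) = exp(tD_i)c₀ + ∫₀ᵗ exp((t−s)D_i) E_i c_{i−1}(s) ds, where (D_i,E_i) = (B,A) for even i and (A,B) for odd i. Then for every i ≥ 1 there is a constant C_i depending only on ‖A‖, ‖B‖ such that ‖c_i(τ) − exp(τ(A+B))c₀‖ ≤ C_i τ^i ‖c₀‖ for all τ ∈ [0,1]. -/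
set_option linter.unusedSectionVars false
set_option maxHeartbeats 1600000
set_option synthInstance.maxHeartbeats 400000

open NormedSpace intervalIntegral

section Aux
variable {X : Type*} [NormedAddCommGroup X] [NormedSpace ℝ X] [CompleteSpace X]

lemma my_norm_exp_le (M : X →L[ℝ] X) : ‖NormedSpace.exp M‖ ≤ Real.exp ‖M‖ := by
  rw [NormedSpace.exp_eq_tsum ℝ, Real.exp_eq_exp_ℝ, NormedSpace.exp_eq_tsum ℝ]
  refine (norm_tsum_le_tsum_norm (NormedSpace.norm_expSeries_summable' M)).trans ?_
  refine Summable.tsum_le_tsum (fun n => ?_) (NormedSpace.norm_expSeries_summable' M)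
    (NormedSpace.expSeries_summable' (𝕂 := ℝ) ‖M‖)
  rw [norm_smul, norm_inv, Real.norm_natCast, smul_eq_mul]
  gcongr
  rcases n with _ | n
  · simpa [ContinuousLinearMap.one_def] using ContinuousLinearMap.norm_id_le
  · exact norm_pow_le' M n.succ_pos

lemma my_exp_path_cont (M : X →L[ℝ] X) :
    Continuous fun s : ℝ => NormedSpace.exp (s • M) :=
  by letI : NormedAlgebra ℚ (X →L[ℝ] X) := .restrictScalars ℚ ℝ _
     exact NormedSpace.exp_continuous.comp (continuous_id.smul continuous_const)

lemma my_exp_op_bound (M : X →L[ℝ] X) {r : ℝ} (hr : |r| ≤ 1) :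
    ‖NormedSpace.exp (r • M)‖ ≤ Real.exp ‖M‖ := by
  refine (my_norm_exp_le _).trans (Real.exp_le_exp.2 ((_root_.norm_smul_le r M).trans ?_))
  rw [Real.norm_eq_abs]
  exact mul_le_of_le_one_left (norm_nonneg M) hr

lemma my_integrand_bound (M N : X →L[ℝ] X) {r : ℝ} (hr : |r| ≤ 1) {x : X} {b : ℝ}
    (hx : ‖x‖ ≤ b) :
    ‖NormedSpace.exp (r • M) (N x)‖ ≤ Real.exp ‖M‖ * ‖N‖ * b := by
  calc ‖NormedSpace.exp (r • M) (N x)‖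
      ≤ ‖NormedSpace.exp (r • M)‖ * ‖N x‖ := ContinuousLinearMap.le_opNorm _ _
    _ ≤ Real.exp ‖M‖ * (‖N‖ * b) := by
        refine mul_le_mul (my_exp_op_bound M hr)
          ((N.le_opNorm x).trans (mul_le_mul_of_nonneg_left hx (norm_nonneg N)))
          (norm_nonneg _) (Real.exp_pos _).le
    _ = Real.exp ‖M‖ * ‖N‖ * b := (mul_assoc _ _ _).symm

/-- Variation of constants formula. -/
lemma my_voc (M N : X →L[ℝ] X) (c₀ : X) (t : ℝ) :
    NormedSpace.exp (t • (M + N)) c₀ =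
      NormedSpace.exp (t • M) c₀ +
        ∫ s in (0:ℝ)..t,
          NormedSpace.exp ((t - s) • M) (N (NormedSpace.exp (s • (M + N)) c₀)) := by
  set F : ℝ → (X →L[ℝ] X) := fun s =>
    NormedSpace.exp ((t - s) • M) * NormedSpace.exp (s • (M + N)) with hFdef
  have hF : ∀ s : ℝ, HasDerivAt F
      (NormedSpace.exp ((t - s) • M) * (N * NormedSpace.exp (s • (M + N)))) s := by
    intro s
    have h1 : HasDerivAt (fun s : ℝ => NormedSpace.exp ((t - s) • M))
        (-(NormedSpace.exp ((t - s) • M) * M)) s := by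
      have hg : HasDerivAt (fun s : ℝ => t - s) (-1) s := (hasDerivAt_id s).const_sub t
      have := (hasDerivAt_exp_smul_const (𝕂 := ℝ) M (t - s)).scomp s hg
      simp at this; exact this
    have h2 : HasDerivAt (fun s : ℝ => NormedSpace.exp (s • (M + N)))
        ((M + N) * NormedSpace.exp (s • (M + N))) s :=
      hasDerivAt_exp_smul_const' (M + N) s
    have h3 := h1.mul h2
    refine h3.congr_deriv ?_
    noncomm_ring
  have hf : ∀ s : ℝ, HasDerivAt (fun s => F s c₀)
      ((NormedSpace.exp ((t - s) • M) * (N * NormedSpace.exp (s • (M + N)))) c₀) s := by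
    intro s
    simpa using (hF s).clm_apply (hasDerivAt_const s c₀)
  have hcont : Continuous fun s : ℝ =>
      (NormedSpace.exp ((t - s) • M) * (N * NormedSpace.exp (s • (M + N)))) c₀ := by
    refine Continuous.clm_apply ?_ continuous_const
    exact (((my_exp_path_cont M).comp (continuous_const.sub continuous_id)).mul
      (continuous_const.mul (my_exp_path_cont (M + N))))
  have key := intervalIntegral.integral_eq_sub_of_hasDerivAt
    (f := fun s => F s c₀) (fun s _ => hf s)
    (hcont.intervalIntegrable 0 t)
  have hFt : F t c₀ = NormedSpace.exp (t • (M + N)) c₀ := by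
    simp [hFdef, NormedSpace.exp_zero]
  have hF0 : F 0 c₀ = NormedSpace.exp (t • M) c₀ := by
    simp [hFdef, NormedSpace.exp_zero]
  have : (∫ s in (0:ℝ)..t,
      NormedSpace.exp ((t - s) • M) (N (NormedSpace.exp (s • (M + N)) c₀))) =
      NormedSpace.exp (t • (M + N)) c₀ - NormedSpace.exp (t • M) c₀ := by
    rw [← hFt, ← hF0, ← key]
    simp [ContinuousLinearMap.mul_apply]
  rw [this]; abel

end Aux

/-- Consistency of the iterative operator-splitting scheme: the `i`-th iterate
satisfies `‖c_i(τ) − exp(τ(A+B))c₀‖ ≤ C_i τ^i ‖c₀‖` for `τ ∈ [0,1]`. -/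
theorem iterative_splitting_order {X : Type*} [NormedAddCommGroup X]
    [NormedSpace ℝ X] [CompleteSpace X] (A B : X →L[ℝ] X) (c₀ : X)
    (D E : ℕ → (X →L[ℝ] X))
    (hD : ∀ i, D i = if Even i then B else A)
    (hE : ∀ i, E i = if Even i then A else B)
    (c : ℕ → ℝ → X)
    (hc1 : ∀ t : ℝ, c 1 t = (NormedSpace.exp (t • A)) c₀)
    (hrec : ∀ i, 2 ≤ i → ∀ t : ℝ, c i t =
      (NormedSpace.exp (t • D i)) c₀ +
        ∫ s in (0:ℝ)..t, (NormedSpace.exp ((t - s) • D i)) ((E i) (c (i - 1) s))) :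
    ∀ i, 1 ≤ i → ∃ C : ℝ, 0 ≤ C ∧ ∀ τ : ℝ, 0 ≤ τ → τ ≤ 1 →
      ‖c i τ - (NormedSpace.exp (τ • (A + B))) c₀‖ ≤ C * τ ^ i * ‖c₀‖ := by
  have hDE : ∀ i, D i + E i = A + B := by
    intro i; rw [hD, hE]; split_ifs
    · exact add_comm B A
    · rfl
  suffices H : ∀ i, 1 ≤ i → Continuous (c i) ∧ ∃ C : ℝ, 0 ≤ C ∧ ∀ τ : ℝ, 0 ≤ τ → τ ≤ 1 →
      ‖c i τ - NormedSpace.exp (τ • (A + B)) c₀‖ ≤ C * τ ^ i * ‖c₀‖ by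
    exact fun i hi => (H i hi).2
  intro i hi
  induction i, hi using Nat.le_induction with
  | base =>
    constructor
    · have : c 1 = fun t => NormedSpace.exp (t • A) c₀ := funext hc1
      rw [this]
      exact (my_exp_path_cont A).clm_apply continuous_const
    · refine ⟨Real.exp ‖A‖ * ‖B‖ * Real.exp ‖A + B‖, by positivity, fun τ h0 h1 => ?_⟩
      have heq : c 1 τ - NormedSpace.exp (τ • (A + B)) c₀ =
          -∫ s in (0:ℝ)..τ,
            NormedSpace.exp ((τ - s) • A) (B (NormedSpace.exp (s • (A + B)) c₀)) := by
        rw [hc1, my_voc A B c₀ τ]; abel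
      rw [heq, norm_neg]
      have hb : ∀ s ∈ Set.uIoc (0:ℝ) τ,
          ‖NormedSpace.exp ((τ - s) • A) (B (NormedSpace.exp (s • (A + B)) c₀))‖ ≤
            Real.exp ‖A‖ * ‖B‖ * (Real.exp ‖A + B‖ * ‖c₀‖) := by
        intro s hs
        rw [Set.uIoc_of_le h0] at hs
        have h1' : |τ - s| ≤ 1 := by
          rw [abs_of_nonneg (by linarith [hs.1, hs.2])]; linarith [hs.1, hs.2]
        have h2' : |s| ≤ 1 := by rw [abs_of_nonneg hs.1.le]; linarith [hs.2]
        have hx : ‖NormedSpace.exp (s • (A + B)) c₀‖ ≤ Real.exp ‖A + B‖ * ‖c₀‖ :=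
          (ContinuousLinearMap.le_opNorm _ _).trans
            (mul_le_mul_of_nonneg_right (my_exp_op_bound _ h2') (norm_nonneg c₀))
        exact my_integrand_bound A B h1' hx
      refine (intervalIntegral.norm_integral_le_of_norm_le_const hb).trans ?_
      rw [abs_of_nonneg (by linarith : (0:ℝ) ≤ τ - 0)]
      rw [pow_one]
      ring_nf
      exact le_refl _
  | succ i hi IH =>
    obtain ⟨hcont, C, hC0, hC⟩ := IH
    have h2 : (2:ℕ) ≤ i + 1 := by omega
    have hrec' : ∀ t : ℝ, c (i+1) t = NormedSpace.exp (t • D (i+1)) c₀ +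
        ∫ s in (0:ℝ)..t, NormedSpace.exp ((t - s) • D (i+1)) (E (i+1) (c i s)) := by
      intro t; simpa using hrec (i+1) h2 t
    have hg : Continuous fun s : ℝ => E (i+1) (c i s) := (E (i+1)).continuous.comp hcont
    have hint : ∀ τ : ℝ, Continuous fun s =>
        NormedSpace.exp ((τ - s) • D (i+1)) (E (i+1) (c i s)) := fun τ =>
      Continuous.clm_apply ((my_exp_path_cont _).comp (continuous_const.sub continuous_id)) hg
    have hintu : ∀ τ : ℝ, Continuous fun s =>
        NormedSpace.exp ((τ - s) • D (i+1))
          (E (i+1) (NormedSpace.exp (s • (A + B)) c₀)) := fun τ =>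
      Continuous.clm_apply ((my_exp_path_cont _).comp (continuous_const.sub continuous_id))
        ((E (i+1)).continuous.comp ((my_exp_path_cont _).clm_apply continuous_const))
    constructor
    · -- continuity of c (i+1)
      have comm : ∀ t s : ℝ, NormedSpace.exp ((t - s) • D (i+1)) =
          NormedSpace.exp (t • D (i+1)) * NormedSpace.exp ((-s) • D (i+1)) := by
        intro t s
        letI : NormedAlgebra ℚ (X →L[ℝ] X) := .restrictScalars ℚ ℝ _
        rw [← NormedSpace.exp_add_of_commute
          (((Commute.refl (D (i+1))).smul_left t).smul_right (-s)), ← add_smul,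
          ← sub_eq_add_neg]
      have hgint : Continuous fun s : ℝ =>
          NormedSpace.exp ((-s) • D (i+1)) (E (i+1) (c i s)) :=
        Continuous.clm_apply ((my_exp_path_cont _).comp continuous_neg) hg
      have heq : c (i+1) = fun t => NormedSpace.exp (t • D (i+1)) c₀ +
          NormedSpace.exp (t • D (i+1))
            (∫ s in (0:ℝ)..t, NormedSpace.exp ((-s) • D (i+1)) (E (i+1) (c i s))) := by
        funext t
        rw [hrec' t]
        congr 1
        calc (∫ s in (0:ℝ)..t, NormedSpace.exp ((t - s) • D (i+1)) (E (i+1) (c i s)))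
            = ∫ s in (0:ℝ)..t, NormedSpace.exp (t • D (i+1))
                (NormedSpace.exp ((-s) • D (i+1)) (E (i+1) (c i s))) := by
              simp_rw [comm t, ContinuousLinearMap.mul_apply]
          _ = _ := ContinuousLinearMap.intervalIntegral_comp_comm _
                (hgint.intervalIntegrable 0 t)
      rw [heq]
      have hprim : Continuous fun t : ℝ =>
          ∫ s in (0:ℝ)..t, NormedSpace.exp ((-s) • D (i+1)) (E (i+1) (c i s)) :=
        intervalIntegral.continuous_primitive (fun a b => hgint.intervalIntegrable a b) 0
      exact ((my_exp_path_cont _).clm_apply continuous_const).add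
        ((my_exp_path_cont _).clm_apply hprim)
    · refine ⟨Real.exp ‖D (i+1)‖ * ‖E (i+1)‖ * C, by positivity, fun τ h0 h1 => ?_⟩
      have hu : NormedSpace.exp (τ • (A + B)) c₀ = NormedSpace.exp (τ • D (i+1)) c₀ +
          ∫ s in (0:ℝ)..τ, NormedSpace.exp ((τ - s) • D (i+1))
            (E (i+1) (NormedSpace.exp (s • (A + B)) c₀)) := by
        have := my_voc (D (i+1)) (E (i+1)) c₀ τ
        rwa [hDE (i+1)] at this
      have herr : c (i+1) τ - NormedSpace.exp (τ • (A + B)) c₀ =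
          ∫ s in (0:ℝ)..τ, NormedSpace.exp ((τ - s) • D (i+1))
            (E (i+1) (c i s - NormedSpace.exp (s • (A + B)) c₀)) := by
        rw [hrec' τ, hu]
        simp only [map_sub]
        rw [intervalIntegral.integral_sub ((hint τ).intervalIntegrable 0 τ)
          ((hintu τ).intervalIntegrable 0 τ)]
        abel
      rw [herr]
      have hfc : Continuous fun s : ℝ => NormedSpace.exp ((τ - s) • D (i+1))
          (E (i+1) (c i s - NormedSpace.exp (s • (A + B)) c₀)) :=
        Continuous.clm_apply ((my_exp_path_cont _).comp (continuous_const.sub continuous_id))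
          ((E (i+1)).continuous.comp (hcont.sub ((my_exp_path_cont _).clm_apply continuous_const)))
      have hb : ∀ s ∈ Set.Icc (0:ℝ) τ,
          ‖NormedSpace.exp ((τ - s) • D (i+1))
            (E (i+1) (c i s - NormedSpace.exp (s • (A + B)) c₀))‖ ≤
            Real.exp ‖D (i+1)‖ * ‖E (i+1)‖ * (C * ‖c₀‖) * s ^ i := by
        intro s hs
        have h1' : |τ - s| ≤ 1 := by
          rw [abs_of_nonneg (by linarith [hs.1, hs.2])]; linarith [hs.1, hs.2]
        have hbx := hC s hs.1 (hs.2.trans h1)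
        calc ‖NormedSpace.exp ((τ - s) • D (i+1))
              (E (i+1) (c i s - NormedSpace.exp (s • (A + B)) c₀))‖
            ≤ Real.exp ‖D (i+1)‖ * ‖E (i+1)‖ * (C * s ^ i * ‖c₀‖) :=
              my_integrand_bound _ _ h1' hbx
          _ = Real.exp ‖D (i+1)‖ * ‖E (i+1)‖ * (C * ‖c₀‖) * s ^ i := by ring
      calc ‖∫ s in (0:ℝ)..τ, NormedSpace.exp ((τ - s) • D (i+1))
              (E (i+1) (c i s - NormedSpace.exp (s • (A + B)) c₀))‖
          ≤ ∫ s in (0:ℝ)..τ, ‖NormedSpace.exp ((τ - s) • D (i+1))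
              (E (i+1) (c i s - NormedSpace.exp (s • (A + B)) c₀))‖ :=
            intervalIntegral.norm_integral_le_integral_norm h0
        _ ≤ ∫ s in (0:ℝ)..τ,
              Real.exp ‖D (i+1)‖ * ‖E (i+1)‖ * (C * ‖c₀‖) * s ^ i :=
            intervalIntegral.integral_mono_on h0 (hfc.norm.intervalIntegrable 0 τ)
              ((continuous_const.mul (continuous_pow i)).intervalIntegrable 0 τ) hb
        _ = Real.exp ‖D (i+1)‖ * ‖E (i+1)‖ * (C * ‖c₀‖) * (τ ^ (i+1) / (i+1)) := by
            rw [intervalIntegral.integral_const_mul, integral_pow]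
            norm_num
        _ ≤ Real.exp ‖D (i+1)‖ * ‖E (i+1)‖ * C * τ ^ (i+1) * ‖c₀‖ := by
            have hle : τ ^ (i+1) / (i+1 : ℝ) ≤ τ ^ (i+1) := by
              apply div_le_self (pow_nonneg h0 _)
              exact_mod_cast Nat.one_le_iff_ne_zero.2 (Nat.succ_ne_zero i)
            have hnn : (0:ℝ) ≤ Real.exp ‖D (i+1)‖ * ‖E (i+1)‖ * (C * ‖c₀‖) := by positivity
            calc Real.exp ‖D (i+1)‖ * ‖E (i+1)‖ * (C * ‖c₀‖) * (τ ^ (i+1) / (i+1))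
                ≤ Real.exp ‖D (i+1)‖ * ‖E (i+1)‖ * (C * ‖c₀‖) * τ ^ (i+1) :=
                  mul_le_mul_of_nonneg_left hle hnn
              _ = Real.exp ‖D (i+1)‖ * ‖E (i+1)‖ * C * τ ^ (i+1) * ‖c₀‖ := by ring
end
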